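/- arXiv:1609.03132 — 2 statements merged into one kernel-verified Lean document; each statement's English description precedes it below -/
import Mathlib

section
/- Let T > 0 and (E,d) a metric space, δ ∈ (0,1), p ∈ [1/δ,∞). For every continuous f : [0,T] → E and every subinterval [s,t] ⊆ [0,T], one has d(f_s,f_t)^{1/δ} ≤ ‖f‖_{V^{δ,p};[s,t]}^{1/δ} · |t-s|^{1 - 1/(δp)}, and the right-hand side, as a function of (s,t), is super-additive on Δ_T. -/
open scoped ENNReal NNReal
open MeasureTheory

/-- `u 0, u 1, ..., u n` are the points of a partition of `[s,t]`. -/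
def IsPart (s t : ℝ) (n : ℕ) (u : ℕ → ℝ) : Prop :=
  u 0 = s ∧ u n = t ∧ ∀ i < n, u i < u (i + 1)

/-- Riesz-type sum of `f` along a partition, with parameters `δ, p`. -/
noncomputable def rieszSum {E : Type*} [PseudoEMetricSpace E] (f : ℝ → E) (δ p : ℝ)
    (n : ℕ) (u : ℕ → ℝ) : ℝ≥0∞ :=
  ∑ i ∈ Finset.range n,
    edist (f (u i)) (f (u (i + 1))) ^ p / ENNReal.ofReal (u (i + 1) - u i) ^ (δ * p - 1)

/-- Riesz type variation seminorm `‖f‖_{V^{δ,p};[s,t]}`. -/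
noncomputable def VNorm {E : Type*} [PseudoEMetricSpace E] (f : ℝ → E) (δ p : ℝ)
    (s t : ℝ) : ℝ≥0∞ :=
  (⨆ n, ⨆ u, ⨆ _ : IsPart s t n u, rieszSum f δ p n u) ^ (1 / p)

/-- `q`-variation seminorm `‖f‖_{q-var;[s,t]}`. -/
noncomputable def qVar {E : Type*} [PseudoEMetricSpace E] (f : ℝ → E) (q : ℝ)
    (s t : ℝ) : ℝ≥0∞ :=
  (⨆ n, ⨆ u, ⨆ _ : IsPart s t n u,
    ∑ i ∈ Finset.range n, edist (f (u i)) (f (u (i + 1))) ^ q) ^ (1 / q)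

/-- `δ`-Hölder seminorm on `[s,t]`, i.e. `‖f‖_{V^{δ,∞};[s,t]}`. -/
noncomputable def holNorm {E : Type*} [PseudoEMetricSpace E] (f : ℝ → E) (δ : ℝ)
    (s t : ℝ) : ℝ≥0∞ :=
  ⨆ u, ⨆ v, ⨆ _ : s ≤ u ∧ u < v ∧ v ≤ t,
    edist (f u) (f v) / ENNReal.ofReal (v - u) ^ δ

/-- Nikolskii seminorm `‖f‖_{N^{δ,p};[s,t]}`. -/
noncomputable def nikNorm {E : Type*} [PseudoEMetricSpace E] (f : ℝ → E) (δ p : ℝ)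
    (s t : ℝ) : ℝ≥0∞ :=
  ⨆ h : ℝ, ⨆ _ : 0 < h ∧ h ≤ t - s,
    ENNReal.ofReal h ^ (-δ) *
      (∫⁻ r in Set.Ioc s (t - h), edist (f r) (f (r + h)) ^ p) ^ (1 / p)

/-- Refined Nikolskii seminorm `‖f‖_{\hat N^{δ,p};[s,t]}`. -/
noncomputable def nikHatNorm {E : Type*} [PseudoEMetricSpace E] (f : ℝ → E) (δ p : ℝ)
    (s t : ℝ) : ℝ≥0∞ :=
  (⨆ n, ⨆ u, ⨆ _ : IsPart s t n u,
    ∑ i ∈ Finset.range n, nikNorm f δ p (u i) (u (i + 1)) ^ p) ^ (1 / p)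

/-- Mixed Hölder-variation seminorm `‖f‖_{\tilde V^{δ,p};[s,t]}`. -/
noncomputable def tildeVNorm {E : Type*} [PseudoEMetricSpace E] (f : ℝ → E) (δ p : ℝ)
    (s t : ℝ) : ℝ≥0∞ :=
  (⨆ n, ⨆ u, ⨆ _ : IsPart s t n u,
    ∑ i ∈ Finset.range n,
      qVar f (1 / δ) (u i) (u (i + 1)) ^ p
        / ENNReal.ofReal (u (i + 1) - u i) ^ (δ * p - 1)) ^ (1 / p)

/-- Fractional Sobolev (Sobolev–Slobodeckij) seminorm `‖f‖_{W^{δ,p};[s,t]}`. -/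
noncomputable def sobNorm {E : Type*} [PseudoEMetricSpace E] (f : ℝ → E) (δ p : ℝ)
    (s t : ℝ) : ℝ≥0∞ :=
  (∫⁻ v in Set.Ioc s t, ∫⁻ u in Set.Ioc s t,
    edist (f u) (f v) ^ p / ENNReal.ofReal |v - u| ^ (1 + δ * p)) ^ (1 / p)

section AuxiliaryForStatement18

/-- AM-GM for two ENNReal numbers. -/
lemma my_amgm {θ : ℝ} (hθ : 0 < θ) (hθ1 : θ < 1) (x y : ℝ≥0∞) :
    x ^ θ * y ^ (1 - θ) ≤ ENNReal.ofReal θ * x + ENNReal.ofReal (1 - θ) * y := by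
  have h1θ : (0:ℝ) < 1 - θ := by linarith
  rcases eq_or_ne x ⊤ with rfl | hx
  · have : ENNReal.ofReal θ * ⊤ = ⊤ :=
      ENNReal.mul_top (by simpa [ENNReal.ofReal_eq_zero] using hθ)
    rw [this, top_add]; exact le_top
  rcases eq_or_ne y ⊤ with rfl | hy
  · have : ENNReal.ofReal (1 - θ) * ⊤ = ⊤ :=
      ENNReal.mul_top (by simpa [ENNReal.ofReal_eq_zero] using h1θ)
    rw [this, add_top]; exact le_top
  lift x to ℝ≥0 using hx
  lift y to ℝ≥0 using hy
  rw [← ENNReal.coe_rpow_of_nonneg x hθ.le, ← ENNReal.coe_rpow_of_nonneg y h1θ.le,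
    ← ENNReal.coe_mul, ENNReal.ofReal, ENNReal.ofReal, ← ENNReal.coe_mul, ← ENNReal.coe_mul,
    ← ENNReal.coe_add, ENNReal.coe_le_coe]
  have hsum : θ.toNNReal + (1 - θ).toNNReal = 1 := by
    rw [← Real.toNNReal_add hθ.le h1θ.le]; norm_num
  have := NNReal.geom_mean_le_arith_mean2_weighted θ.toNNReal (1 - θ).toNNReal x y hsum
  rwa [Real.coe_toNNReal _ hθ.le, Real.coe_toNNReal _ h1θ.le] at this

/-- Two-term reverse Hölder / superadditivity of the geometric mean. -/
lemma my_geom2 {θ : ℝ} (hθ : 0 < θ) (hθ1 : θ ≤ 1) (a b c d : ℝ≥0∞) :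
    a ^ θ * b ^ (1 - θ) + c ^ θ * d ^ (1 - θ) ≤ (a + c) ^ θ * (b + d) ^ (1 - θ) := by
  rcases eq_or_lt_of_le hθ1 with rfl | hθ1
  · simp
  have h1θ : (0:ℝ) < 1 - θ := by linarith
  rcases eq_or_ne (a + c) 0 with hA | hA
  · obtain ⟨rfl, rfl⟩ := add_eq_zero.mp hA
    simp [ENNReal.zero_rpow_of_pos hθ]
  rcases eq_or_ne (b + d) 0 with hB | hB
  · obtain ⟨rfl, rfl⟩ := add_eq_zero.mp hB
    simp [ENNReal.zero_rpow_of_pos h1θ]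
  rcases eq_or_ne (a + c) ⊤ with hA' | hA'
  · rw [hA', ENNReal.top_rpow_of_pos hθ, ENNReal.top_mul]
    · exact le_top
    · exact (ENNReal.rpow_pos_of_nonneg (pos_iff_ne_zero.mpr hB) h1θ.le).ne'
  rcases eq_or_ne (b + d) ⊤ with hB' | hB'
  · rw [hB', ENNReal.top_rpow_of_pos h1θ, ENNReal.mul_top]
    · exact le_top
    · exact (ENNReal.rpow_pos_of_nonneg (pos_iff_ne_zero.mpr hA) hθ.le).ne'
  have key : ∀ x y : ℝ≥0∞, x ^ θ * y ^ (1 - θ)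
      = (a + c) ^ θ * (b + d) ^ (1 - θ) * ((x / (a + c)) ^ θ * (y / (b + d)) ^ (1 - θ)) := by
    intro x y
    rw [mul_mul_mul_comm, ← ENNReal.mul_rpow_of_nonneg _ _ hθ.le,
      ← ENNReal.mul_rpow_of_nonneg _ _ h1θ.le, ENNReal.mul_div_cancel hA hA',
      ENNReal.mul_div_cancel hB hB']
  rw [key a b, key c d, ← mul_add]
  calc (a + c) ^ θ * (b + d) ^ (1 - θ) *
        ((a / (a + c)) ^ θ * (b / (b + d)) ^ (1 - θ)
          + (c / (a + c)) ^ θ * (d / (b + d)) ^ (1 - θ))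
      ≤ (a + c) ^ θ * (b + d) ^ (1 - θ) *
        ((ENNReal.ofReal θ * (a / (a + c)) + ENNReal.ofReal (1 - θ) * (b / (b + d)))
          + (ENNReal.ofReal θ * (c / (a + c)) + ENNReal.ofReal (1 - θ) * (d / (b + d)))) :=
        mul_le_mul_right (add_le_add (my_amgm hθ hθ1 _ _) (my_amgm hθ hθ1 _ _)) _
    _ = (a + c) ^ θ * (b + d) ^ (1 - θ) *
        (ENNReal.ofReal θ * (a / (a + c) + c / (a + c))
          + ENNReal.ofReal (1 - θ) * (b / (b + d) + d / (b + d))) := by ring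
    _ = (a + c) ^ θ * (b + d) ^ (1 - θ) := by
        rw [ENNReal.div_add_div_same, ENNReal.div_add_div_same,
          ENNReal.div_self hA hA', ENNReal.div_self hB hB', mul_one, mul_one,
          ← ENNReal.ofReal_add hθ.le h1θ.le]
        norm_num

variable {E : Type*} [PseudoEMetricSpace E]

/-- The supremum of Riesz sums over partitions of `[s,t]`. -/
noncomputable def Ssup (f : ℝ → E) (δ p s t : ℝ) : ℝ≥0∞ :=
  ⨆ n, ⨆ u, ⨆ _ : IsPart s t n u, rieszSum f δ p n u

lemma VNorm_eq_Ssup (f : ℝ → E) (δ p s t : ℝ) :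
    VNorm f δ p s t = Ssup f δ p s t ^ (1 / p) := rfl

lemma le_Ssup {f : ℝ → E} {δ p s t : ℝ} {n : ℕ} {u : ℕ → ℝ} (h : IsPart s t n u) :
    rieszSum f δ p n u ≤ Ssup f δ p s t :=
  le_iSup_of_le n (le_iSup_of_le u (le_iSup_of_le h le_rfl))

lemma Ssup_le {f : ℝ → E} {δ p s t : ℝ} {C : ℝ≥0∞}
    (h : ∀ n u, IsPart s t n u → rieszSum f δ p n u ≤ C) : Ssup f δ p s t ≤ C :=
  iSup_le fun n => iSup_le fun u => iSup_le fun hn => h n u hn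

lemma exists_part {s t : ℝ} (h : s ≤ t) : ∃ x : ℕ × (ℕ → ℝ), IsPart s t x.1 x.2 := by
  rcases eq_or_lt_of_le h with rfl | h
  · exact ⟨(0, fun _ => s), rfl, rfl, by omega⟩
  · refine ⟨(1, fun i => if i = 0 then s else t), by simp, by simp, ?_⟩
    intro i hi
    interval_cases i
    simpa using h

lemma Ssup_eq (f : ℝ → E) (δ p s t : ℝ) :
    Ssup f δ p s t
      = ⨆ x : {x : ℕ × (ℕ → ℝ) // IsPart s t x.1 x.2}, rieszSum f δ p x.1.1 x.1.2 := by
  apply le_antisymm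
  · exact Ssup_le fun n u h => le_iSup_of_le ⟨(n, u), h⟩ le_rfl
  · exact iSup_le fun x => le_Ssup x.2

lemma concat_part {f : ℝ → E} {δ p s t u : ℝ} {n₁ n₂ : ℕ} {u₁ u₂ : ℕ → ℝ}
    (h₁ : IsPart s t n₁ u₁) (h₂ : IsPart t u n₂ u₂) :
    ∃ w, IsPart s u (n₁ + n₂) w ∧
      rieszSum f δ p (n₁ + n₂) w = rieszSum f δ p n₁ u₁ + rieszSum f δ p n₂ u₂ := by
  set w : ℕ → ℝ := fun i => if i ≤ n₁ then u₁ i else u₂ (i - n₁) with hw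
  have hw1 : ∀ i ≤ n₁, w i = u₁ i := fun i hi => if_pos hi
  have hw2 : ∀ j, w (n₁ + j) = u₂ j := by
    intro j
    rcases Nat.eq_zero_or_pos j with rfl | hj
    · simpa [w] using h₁.2.1.trans h₂.1.symm
    · have h' : ¬ (n₁ + j ≤ n₁) := by omega
      simp [w, h', Nat.add_sub_cancel_left]
  refine ⟨w, ⟨?_, ?_, ?_⟩, ?_⟩
  · rw [hw1 0 (Nat.zero_le _)]; exact h₁.1
  · rw [hw2 n₂]; exact h₂.2.1
  · intro i hi
    rcases lt_or_ge i n₁ with h | h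
    · rw [hw1 i h.le, hw1 (i + 1) h]
      exact h₁.2.2 i h
    · obtain ⟨j, rfl⟩ := Nat.exists_eq_add_of_le h
      have hj : j < n₂ := by omega
      rw [hw2 j, show n₁ + j + 1 = n₁ + (j + 1) by omega, hw2 (j + 1)]
      exact h₂.2.2 j hj
  · rw [rieszSum, Finset.sum_range_add]
    congr 1
    · refine Finset.sum_congr rfl fun i hi => ?_
      rw [Finset.mem_range] at hi
      rw [hw1 i (by omega), hw1 (i + 1) (by omega)]
    · refine Finset.sum_congr rfl fun j hj => ?_
      rw [show n₁ + j + 1 = n₁ + (j + 1) by omega, hw2 j, hw2 (j + 1)]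

lemma Ssup_superadd (f : ℝ → E) (δ p : ℝ) {s t u : ℝ} (hst : s ≤ t) (htu : t ≤ u) :
    Ssup f δ p s t + Ssup f δ p t u ≤ Ssup f δ p s u := by
  rw [Ssup_eq f δ p s t, Ssup_eq f δ p t u]
  haveI : Nonempty {x : ℕ × (ℕ → ℝ) // IsPart s t x.1 x.2} :=
    nonempty_subtype.mpr (exists_part hst)
  haveI : Nonempty {x : ℕ × (ℕ → ℝ) // IsPart t u x.1 x.2} :=
    nonempty_subtype.mpr (exists_part htu)
  refine ENNReal.iSup_add_iSup_le fun x y => ?_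
  obtain ⟨w, hw, hsum⟩ := concat_part (f := f) (δ := δ) (p := p) x.2 y.2
  exact hsum ▸ le_Ssup hw

end AuxiliaryForStatement18

/-- pointwise estimate via a super-additive control. -/
theorem edist_rpow_le_superadditive_control {E : Type*} [PseudoEMetricSpace E]
    (T δ p : ℝ) (f : ℝ → E)
    (hT : 0 < T) (hδ : 0 < δ) (hδ1 : δ < 1) (hp : 1 / δ ≤ p)
    (hf : ContinuousOn f (Set.Icc 0 T)) :
    (∀ s t, 0 ≤ s → s ≤ t → t ≤ T →
      edist (f s) (f t) ^ (1 / δ) ≤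
        VNorm f δ p s t ^ (1 / δ) * ENNReal.ofReal (t - s) ^ (1 - 1 / (δ * p))) ∧
    (∀ s t u, 0 ≤ s → s ≤ t → t ≤ u → u ≤ T →
      VNorm f δ p s t ^ (1 / δ) * ENNReal.ofReal (t - s) ^ (1 - 1 / (δ * p)) +
        VNorm f δ p t u ^ (1 / δ) * ENNReal.ofReal (u - t) ^ (1 - 1 / (δ * p)) ≤
      VNorm f δ p s u ^ (1 / δ) * ENNReal.ofReal (u - s) ^ (1 - 1 / (δ * p))) := by
  have hppos : 0 < p := lt_of_lt_of_le (by positivity) hp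
  have hδp : 1 ≤ δ * p := by
    rw [← mul_one_div_cancel hδ.ne']
    exact mul_le_mul_of_nonneg_left hp hδ.le
  have hδppos : 0 < δ * p := lt_of_lt_of_le one_pos hδp
  have hθpos : 0 < 1 / (δ * p) := by positivity
  have hθle : 1 / (δ * p) ≤ 1 := (div_le_one hδppos).mpr hδp
  have hV : ∀ a b : ℝ, VNorm f δ p a b ^ (1 / δ) = Ssup f δ p a b ^ (1 / (δ * p)) := by
    intro a b
    rw [VNorm_eq_Ssup, ← ENNReal.rpow_mul]
    congr 1
    rw [div_mul_div_comm, one_mul, mul_comm p δ]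
  constructor
  · intro s t hs hst hT'
    rcases eq_or_lt_of_le hst with rfl | hst'
    · rw [edist_self, ENNReal.zero_rpow_of_pos (by positivity)]
      exact zero_le
    have hts : 0 < t - s := sub_pos.mpr hst'
    have hpart : IsPart s t 1 (fun i => if i = 0 then s else t) :=
      ⟨by simp, by simp, fun i hi => by interval_cases i; simpa using hst'⟩
    have hR : rieszSum f δ p 1 (fun i => if i = 0 then s else t)
        = edist (f s) (f t) ^ p / ENNReal.ofReal (t - s) ^ (δ * p - 1) := by
      simp [rieszSum]
    have hb0 : ENNReal.ofReal (t - s) ^ (δ * p - 1) ≠ 0 :=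
      (ENNReal.rpow_pos_of_nonneg (ENNReal.ofReal_pos.mpr hts) (by linarith)).ne'
    have hbt : ENNReal.ofReal (t - s) ^ (δ * p - 1) ≠ ⊤ :=
      ENNReal.rpow_ne_top_of_nonneg (by linarith) ENNReal.ofReal_ne_top
    have h2 : edist (f s) (f t) ^ p
        ≤ Ssup f δ p s t * ENNReal.ofReal (t - s) ^ (δ * p - 1) :=
      (ENNReal.div_le_iff hb0 hbt).mp (hR ▸ le_Ssup hpart)
    have h3 := ENNReal.rpow_le_rpow h2 hθpos.le
    rw [← ENNReal.rpow_mul, ENNReal.mul_rpow_of_nonneg _ _ hθpos.le,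
      ← ENNReal.rpow_mul] at h3
    have e1 : p * (1 / (δ * p)) = 1 / δ := by field_simp
    have e2 : (δ * p - 1) * (1 / (δ * p)) = 1 - 1 / (δ * p) := by
      field_simp
    rw [e1, e2] at h3
    rw [hV s t]
    exact h3
  · intro s t u hs hst htu hu'
    rw [hV s t, hV t u, hV s u]
    refine le_trans (my_geom2 hθpos hθle _ _ _ _) ?_
    refine mul_le_mul' (ENNReal.rpow_le_rpow (Ssup_superadd f δ p hst htu) hθpos.le)
      (le_of_eq ?_)
    rw [← ENNReal.ofReal_add (by linarith) (by linarith)]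
    congr 1
    ring
end

section
/- Let T > 0, δ ∈ (0,1), p ∈ (1,∞) with δ > 1/p. For continuous paths X¹, X² : [0,T] → E into a normed space (applied componentwise/levelwise), the inhomogeneous Riesz type distance ρ_{V^{δ,p}} and the inhomogeneous mixed Hölder-variation distance ρ_{\tilde V^{δ,p}} are equivalent: there exist constants c, C > 0 depending only on δ, p such that c·ρ_{V^{δ,p}}(X¹,X²) ≤ ρ_{\tilde V^{δ,p}}(X¹,X²) ≤ C·ρ_{V^{δ,p}}(X¹,X²). For the single-level (k=1, Banach space valued) case: for f := X¹ - X², sup_P (Σ_{[u,v]∈P} ‖f‖_{(1/δ)-var;[u,v]}^p/|v-u|^{δp-1})^{1/p} is comparable with (sup_P Σ_{[u,v]∈P} |f_v-f_u|^p/|v-u|^{δp-1})^{1/p}. -/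
open scoped ENNReal NNReal
open MeasureTheory

section Aux

variable {E : Type*} [PseudoEMetricSpace E]

/-- The sup of Riesz sums over partitions of `[s,t]` (the inner part of `VNorm`). -/
noncomputable def RS (f : ℝ → E) (δ p : ℝ) (s t : ℝ) : ℝ≥0∞ :=
  ⨆ n, ⨆ u, ⨆ _ : IsPart s t n u, rieszSum f δ p n u

lemma isPart_trivial {s t : ℝ} (h : s < t) :
    IsPart s t 1 (fun i => if i = 0 then s else t) := by
  refine ⟨rfl, rfl, ?_⟩
  intro i hi
  interval_cases i
  simpa using h

lemma IsPart.lt' {s t : ℝ} {n : ℕ} {u : ℕ → ℝ} (h : IsPart s t n u) :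
    ∀ j ≤ n, ∀ i < j, u i < u j := by
  intro j
  induction j with
  | zero => omega
  | succ j ih =>
    intro hj i hi
    have hj' : u j < u (j + 1) := h.2.2 j (by omega)
    rcases Nat.lt_succ_iff_lt_or_eq.mp hi with hi | rfl
    · exact (ih (by omega) i hi).trans hj'
    · exact hj'

lemma IsPart.pos_n {s t : ℝ} {n : ℕ} {u : ℕ → ℝ} (h : IsPart s t n u) (hst : s < t) :
    0 < n := by
  rcases Nat.eq_zero_or_pos n with rfl | hn
  · exact absurd (h.1.symm.trans h.2.1) (ne_of_lt hst)
  · exact hn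

lemma RS_eq (f : ℝ → E) (δ p s t : ℝ) :
    RS f δ p s t = ⨆ q : {q : ℕ × (ℕ → ℝ) // IsPart s t q.1 q.2},
      rieszSum f δ p q.1.1 q.1.2 := by
  apply le_antisymm
  · refine iSup_le fun n => iSup_le fun u => iSup_le fun h => ?_
    exact le_iSup_of_le ⟨(n, u), h⟩ le_rfl
  · refine iSup_le fun q => ?_
    exact le_iSup_of_le q.1.1 <| le_iSup_of_le q.1.2 <| le_iSup_of_le q.2 le_rfl

lemma rieszSum_le_RS (f : ℝ → E) (δ p : ℝ) {s t : ℝ} {n : ℕ} {u : ℕ → ℝ}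
    (h : IsPart s t n u) : rieszSum f δ p n u ≤ RS f δ p s t :=
  le_iSup_of_le n <| le_iSup_of_le u <| le_iSup_of_le h le_rfl

lemma nonempty_part {s t : ℝ} (h : s < t) :
    Nonempty {q : ℕ × (ℕ → ℝ) // IsPart s t q.1 q.2} :=
  ⟨⟨(1, fun i => if i = 0 then s else t), isPart_trivial h⟩⟩

lemma rieszSum_concat (f : ℝ → E) (δ p : ℝ) {r s t : ℝ} (hrs : r < s) (hst : s < t)
    {n m : ℕ} {u w : ℕ → ℝ} (hu : IsPart r s n u) (hw : IsPart s t m w) :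
    rieszSum f δ p n u + rieszSum f δ p m w ≤ RS f δ p r t := by
  have hn : 0 < n := hu.pos_n hrs
  have hm : 0 < m := hw.pos_n hst
  set v : ℕ → ℝ := fun i => if i ≤ n then u i else w (i - n) with hv
  have hvu : ∀ i ≤ n, v i = u i := fun i hi => by simp [hv, hi]
  have hvw : ∀ i, v (n + i) = w i := by
    intro i
    rcases Nat.eq_zero_or_pos i with rfl | hi
    · simpa [hv] using hu.2.1.trans hw.1.symm
    · have hni : ¬ n + i ≤ n := by omega
      simp only [hv, hni, if_false, Nat.add_sub_cancel_left]
  have hpart : IsPart r t (n + m) v := by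
    refine ⟨(hvu 0 (by omega)).trans hu.1, (hvw m).trans hw.2.1, ?_⟩
    intro i hi
    rcases lt_trichotomy i n with h1 | rfl | h1
    · rw [hvu i (by omega), hvu (i + 1) (by omega)]
      exact hu.2.2 i h1
    · have e1 : v i = w 0 := by rw [hvu i le_rfl, hu.2.1, hw.1]
      have e2 : v (i + 1) = w 1 := hvw 1
      rw [e1, e2]
      exact hw.2.2 0 hm
    · obtain ⟨j, rfl⟩ : ∃ j, i = n + j := ⟨i - n, by omega⟩
      have e2 : n + j + 1 = n + (j + 1) := by omega
      rw [hvw j, e2, hvw (j + 1)]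
      exact hw.2.2 j (by omega)
  have hsum : rieszSum f δ p (n + m) v = rieszSum f δ p n u + rieszSum f δ p m w := by
    unfold rieszSum
    rw [Finset.sum_range_add]
    congr 1
    · refine Finset.sum_congr rfl fun i hi => ?_
      rw [Finset.mem_range] at hi
      rw [hvu i (by omega), hvu (i + 1) (by omega)]
    · refine Finset.sum_congr rfl fun i hi => ?_
      rw [show n + i + 1 = n + (i + 1) by omega, hvw i, hvw (i + 1)]
  exact hsum ▸ rieszSum_le_RS f δ p hpart

lemma RS_superadd (f : ℝ → E) (δ p : ℝ) {r s t : ℝ} (hrs : r < s) (hst : s < t) :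
    RS f δ p r s + RS f δ p s t ≤ RS f δ p r t := by
  rw [RS_eq f δ p r s, RS_eq f δ p s t]
  have h1 := nonempty_part hrs
  have h2 := nonempty_part hst
  exact ENNReal.iSup_add_iSup_le fun q q' => rieszSum_concat f δ p hrs hst q.2 q'.2

lemma sum_RS_le (f : ℝ → E) (δ p : ℝ) :
    ∀ (n : ℕ) (s t : ℝ) (u : ℕ → ℝ), s < t → IsPart s t n u →
      ∑ i ∈ Finset.range n, RS f δ p (u i) (u (i + 1)) ≤ RS f δ p s t := by
  intro n
  induction n with
  | zero => intro s t u hst hu; exact absurd (hu.1.symm.trans hu.2.1) (ne_of_lt hst)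
  | succ n ih =>
    intro s t u hst hu
    rcases Nat.eq_zero_or_pos n with rfl | hn
    · rw [Finset.sum_range_one, hu.1, hu.2.1]
    · have hun : IsPart s (u n) n u := ⟨hu.1, rfl, fun i hi => hu.2.2 i (by omega)⟩
      have h1 : s < u n := by
        have := hu.lt' n (by omega) 0 hn
        rwa [hu.1] at this
      have h2 : u n < t := by
        have := hu.2.2 n (by omega)
        rwa [hu.2.1] at this
      calc ∑ i ∈ Finset.range (n + 1), RS f δ p (u i) (u (i + 1))
          = (∑ i ∈ Finset.range n, RS f δ p (u i) (u (i + 1)))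
              + RS f δ p (u n) (u (n + 1)) := Finset.sum_range_succ _ _
        _ ≤ RS f δ p s (u n) + RS f δ p (u n) t := by
            rw [hu.2.1]
            exact add_le_add (ih s (u n) u h1 hun) le_rfl
        _ ≤ RS f δ p s t := RS_superadd f δ p h1 h2

lemma edist_le_qVar (f : ℝ → E) {δ : ℝ} (hδ : 0 < δ) {s t : ℝ} (hst : s < t) :
    edist (f s) (f t) ≤ qVar f (1 / δ) s t := by
  have h1 : edist (f s) (f t) ^ (1 / δ) ≤
      ⨆ n, ⨆ u, ⨆ _ : IsPart s t n u,
        ∑ i ∈ Finset.range n, edist (f (u i)) (f (u (i + 1))) ^ (1 / δ) := by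
    refine le_iSup_of_le 1 <| le_iSup_of_le (fun i => if i = 0 then s else t) <|
      le_iSup_of_le (isPart_trivial hst) ?_
    simp
  have key : edist (f s) (f t) = (edist (f s) (f t) ^ (1 / δ)) ^ δ := by
    rw [← ENNReal.rpow_mul, one_div, inv_mul_cancel₀ hδ.ne', ENNReal.rpow_one]
  rw [key, qVar, one_div_one_div]
  exact ENNReal.rpow_le_rpow h1 hδ.le

lemma qVar_pow_le (f : ℝ → E) {δ p : ℝ} (hδ : 0 < δ) (hp : 1 < p) (hδp : 1 / p < δ)
    {s t : ℝ} (hst : s < t) :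
    qVar f (1 / δ) s t ^ p / ENNReal.ofReal (t - s) ^ (δ * p - 1) ≤ RS f δ p s t := by
  have hp0 : 0 < p := lt_trans one_pos hp
  have hP : 1 < δ * p := by
    have := (div_lt_iff₀ hp0).mp hδp
    linarith
  have hP0 : (0 : ℝ) < δ * p := lt_trans one_pos hP
  set P : ℝ := δ * p with hPdef
  set Q : ℝ := P / (P - 1) with hQdef
  have hpq : P.HolderConjugate Q := Real.HolderConjugate.conjExponent hP
  set D : ℝ≥0∞ := ENNReal.ofReal (t - s) with hD
  set M : ℝ≥0∞ := RS f δ p s t ^ (1 / P) * D ^ ((P - 1) / P) with hM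
  -- step 1 : the q-variation sup is bounded by M
  have step1 : (⨆ n, ⨆ u, ⨆ _ : IsPart s t n u,
      ∑ i ∈ Finset.range n, edist (f (u i)) (f (u (i + 1))) ^ (1 / δ)) ≤ M := by
    refine iSup_le fun n => iSup_le fun u => iSup_le fun hu => ?_
    set Δ : ℕ → ℝ≥0∞ := fun i => ENNReal.ofReal (u (i + 1) - u i) with hΔ
    set F : ℕ → ℝ≥0∞ := fun i =>
      (edist (f (u i)) (f (u (i + 1))) ^ p / Δ i ^ (P - 1)) ^ (1 / P) with hF
    set G : ℕ → ℝ≥0∞ := fun i => Δ i ^ ((P - 1) / P) with hG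
    have hΔpos : ∀ i ∈ Finset.range n, Δ i ≠ 0 ∧ Δ i ≠ ∞ := by
      intro i hi
      rw [Finset.mem_range] at hi
      refine ⟨?_, ENNReal.ofReal_ne_top⟩
      simp only [hΔ, ne_eq, ENNReal.ofReal_eq_zero, not_le]
      linarith [hu.2.2 i hi]
    have hterm : ∀ i ∈ Finset.range n,
        edist (f (u i)) (f (u (i + 1))) ^ (1 / δ) = F i * G i := by
      intro i hi
      obtain ⟨h0, hT⟩ := hΔpos i hi
      have hG0 : G i ≠ 0 := by
        simp only [hG, ne_eq, ENNReal.rpow_eq_zero_iff, not_or, not_and, not_lt]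
        constructor
        · intro h; exact absurd h h0
        · intro h; exact absurd h hT
      have hGT : G i ≠ ∞ := by
        simp only [hG, ne_eq, ENNReal.rpow_eq_top_iff, not_or, not_and, not_lt]
        constructor
        · intro h; exact absurd h h0
        · intro h; exact absurd h hT
      have hδne : δ ≠ 0 := hδ.ne'
      have hpne : p ≠ 0 := hp0.ne'
      have ea : p * (1 / P) = 1 / δ := by
        rw [hPdef]; field_simp
      have eb : (P - 1) * (1 / P) = (P - 1) / P := by rw [mul_one_div]
      have e1 : F i = edist (f (u i)) (f (u (i + 1))) ^ (1 / δ) / G i := by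
        show (edist (f (u i)) (f (u (i + 1))) ^ p / Δ i ^ (P - 1)) ^ (1 / P)
            = edist (f (u i)) (f (u (i + 1))) ^ (1 / δ) / Δ i ^ ((P - 1) / P)
        rw [ENNReal.div_rpow_of_nonneg _ _ (by positivity), ← ENNReal.rpow_mul,
          ← ENNReal.rpow_mul, ea, eb]
      rw [e1, ENNReal.div_mul_cancel hG0 hGT]
    calc ∑ i ∈ Finset.range n, edist (f (u i)) (f (u (i + 1))) ^ (1 / δ)
        = ∑ i ∈ Finset.range n, F i * G i := Finset.sum_congr rfl hterm
      _ ≤ (∑ i ∈ Finset.range n, F i ^ P) ^ (1 / P)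
            * (∑ i ∈ Finset.range n, G i ^ Q) ^ (1 / Q) :=
          ENNReal.inner_le_Lp_mul_Lq _ F G hpq
      _ ≤ M := by
          have eF : ∑ i ∈ Finset.range n, F i ^ P = rieszSum f δ p n u := by
            unfold rieszSum
            refine Finset.sum_congr rfl fun i _ => ?_
            show ((edist (f (u i)) (f (u (i + 1))) ^ p / Δ i ^ (P - 1)) ^ (1 / P)) ^ P = _
            rw [← ENNReal.rpow_mul, one_div, inv_mul_cancel₀ hP0.ne', ENNReal.rpow_one]
          have eG : ∑ i ∈ Finset.range n, G i ^ Q = D := by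
            have e2 : ∀ i ∈ Finset.range n, G i ^ Q = Δ i := by
              intro i _
              show (Δ i ^ ((P - 1) / P)) ^ Q = Δ i
              rw [← ENNReal.rpow_mul]
              have hP1 : P - 1 ≠ 0 := (sub_pos.mpr hP).ne'
              have : (P - 1) / P * Q = 1 := by
                rw [hQdef]
                field_simp
              rw [this, ENNReal.rpow_one]
            rw [Finset.sum_congr rfl e2, hD, hΔ,
              ← ENNReal.ofReal_sum_of_nonneg (fun i hi => by
                rw [Finset.mem_range] at hi
                linarith [hu.2.2 i hi]),
              Finset.sum_range_sub (fun i => u i), hu.1, hu.2.1]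
          rw [eF, eG, hM]
          have h1Q : 1 / Q = (P - 1) / P := by
            rw [hQdef, one_div_div]
          rw [h1Q]
          exact mul_le_mul_left (ENNReal.rpow_le_rpow
            (rieszSum_le_RS f δ p hu) (by positivity)) _
  -- step 2 : conclude
  have hqv : qVar f (1 / δ) s t ^ p = (⨆ n, ⨆ u, ⨆ _ : IsPart s t n u,
      ∑ i ∈ Finset.range n, edist (f (u i)) (f (u (i + 1))) ^ (1 / δ)) ^ P := by
    rw [qVar, one_div_one_div, ← ENNReal.rpow_mul, hPdef]
  refine ENNReal.div_le_of_le_mul ?_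
  rw [hqv]
  calc (⨆ n, ⨆ u, ⨆ _ : IsPart s t n u,
        ∑ i ∈ Finset.range n, edist (f (u i)) (f (u (i + 1))) ^ (1 / δ)) ^ P
      ≤ M ^ P := ENNReal.rpow_le_rpow step1 hP0.le
    _ = RS f δ p s t * ENNReal.ofReal (t - s) ^ (δ * p - 1) := by
        rw [hM, ENNReal.mul_rpow_of_nonneg _ _ hP0.le, ← ENNReal.rpow_mul,
          ← ENNReal.rpow_mul, one_div, inv_mul_cancel₀ hP0.ne',
          ENNReal.rpow_one, div_mul_cancel₀ _ hP0.ne', hD, hPdef]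

end Aux

/-- equivalence of the (first-level) inhomogeneous Riesz type distance
and the inhomogeneous mixed Hölder-variation distance, applied to the difference path. -/
theorem rieszDistance_equiv_mixedDistance {E : Type*} [NormedAddCommGroup E] (δ p : ℝ)
    (hδ : 0 < δ) (hδ1 : δ < 1) (hp : 1 < p) (hδp : 1 / p < δ) :
    ∃ c C : ℝ, 0 < c ∧ 0 < C ∧
      ∀ (T : ℝ) (X₁ X₂ : ℝ → E), 0 < T →
        ContinuousOn X₁ (Set.Icc 0 T) → ContinuousOn X₂ (Set.Icc 0 T) →
        ENNReal.ofReal c * VNorm (fun r => X₁ r - X₂ r) δ p 0 T ≤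
            tildeVNorm (fun r => X₁ r - X₂ r) δ p 0 T ∧
          tildeVNorm (fun r => X₁ r - X₂ r) δ p 0 T ≤
            ENNReal.ofReal C * VNorm (fun r => X₁ r - X₂ r) δ p 0 T := by
  have hp0 : 0 < p := lt_trans one_pos hp
  refine ⟨1, 1, one_pos, one_pos, fun T X₁ X₂ hT _ _ => ?_⟩
  set f : ℝ → E := fun r => X₁ r - X₂ r with hf
  have hV : VNorm f δ p 0 T = RS f δ p 0 T ^ (1 / p) := rfl
  constructor
  · -- VNorm ≤ tildeVNorm
    rw [ENNReal.ofReal_one, one_mul, hV, tildeVNorm]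
    refine ENNReal.rpow_le_rpow ?_ (by positivity)
    refine iSup_le fun n => iSup_le fun u => iSup_le fun hu => ?_
    refine le_iSup_of_le n <| le_iSup_of_le u <| le_iSup_of_le hu ?_
    refine Finset.sum_le_sum fun i hi => ?_
    rw [Finset.mem_range] at hi
    exact ENNReal.div_le_div_right
      (ENNReal.rpow_le_rpow (edist_le_qVar f hδ (hu.2.2 i hi)) hp0.le) _
  · -- tildeVNorm ≤ VNorm
    rw [ENNReal.ofReal_one, one_mul, hV, tildeVNorm]
    refine ENNReal.rpow_le_rpow ?_ (by positivity)
    refine iSup_le fun n => iSup_le fun u => iSup_le fun hu => ?_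
    calc ∑ i ∈ Finset.range n,
          qVar f (1 / δ) (u i) (u (i + 1)) ^ p
            / ENNReal.ofReal (u (i + 1) - u i) ^ (δ * p - 1)
        ≤ ∑ i ∈ Finset.range n, RS f δ p (u i) (u (i + 1)) := by
          refine Finset.sum_le_sum fun i hi => ?_
          rw [Finset.mem_range] at hi
          exact qVar_pow_le f hδ hp hδp (hu.2.2 i hi)
      _ ≤ RS f δ p 0 T := sum_RS_le f δ p n 0 T u hT hu
end
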